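/- arXiv:2204.02808 — 2 statements merged into one kernel-verified Lean document; each statement's English description precedes it below -/
import Mathlib

section
/- Let d ≥ 1 and let α, β be non-negative real numbers with α < d, β < d and α + β > d. Then for every x ∈ ℝ^d, ∫_{ℝ^d} (1+|x-y|²)^{-α/2} (1+|y|²)^{-β/2} dy ≤ C (1+|x|²)^{-(α+β-d)/2} for a constant C depending only on α, β, d. -/
open MeasureTheory Set Metric
open scoped ENNReal

variable {E : Type*} [NormedAddCommGroup E] [NormedSpace ℝ E] [MeasurableSpace E]
  [BorelSpace E] [FiniteDimensional ℝ E] [Nontrivial E] (μ : Measure E) [μ.IsAddHaarMeasure]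

theorem lintegral_fun_norm_polar (f : ℝ → ℝ≥0∞) (hf : Measurable f) :
    ∫⁻ x : E, f ‖x‖ ∂μ = (Module.finrank ℝ E : ℝ≥0∞) * μ (ball (0:E) 1)
      * ∫⁻ r in Set.Ioi (0:ℝ), ENNReal.ofReal (r ^ (Module.finrank ℝ E - 1)) * f r := by
  have hmeas : Measurable fun p : Metric.sphere (0:E) 1 × Set.Ioi (0:ℝ) => f p.2 :=
    hf.comp (measurable_subtype_coe.comp measurable_snd)
  have h1 : ∫⁻ x : E, f ‖x‖ ∂μ = ∫⁻ x in ({0}ᶜ : Set E), f ‖x‖ ∂μ := by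
    rw [MeasureTheory.restrict_compl_singleton]
  have h2 : ∫⁻ x in ({0}ᶜ : Set E), f ‖x‖ ∂μ
      = ∫⁻ x : ({0}ᶜ : Set E), f ‖x.1‖ ∂(μ.comap (↑)) :=
    (lintegral_subtype_comap (measurableSet_singleton 0).compl (fun x => f ‖x‖)).symm
  have h3 : ∫⁻ x : ({0}ᶜ : Set E), f ‖x.1‖ ∂(μ.comap (↑))
      = ∫⁻ p : Metric.sphere (0:E) 1 × Set.Ioi (0:ℝ), f p.2
        ∂(μ.toSphere.prod (Measure.volumeIoiPow (Module.finrank ℝ E - 1))) :=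
    by rw [← (μ.measurePreserving_homeomorphUnitSphereProd).lintegral_comp hmeas]
       simp [homeomorphUnitSphereProd_apply_snd_coe]
  have h4 : ∫⁻ p : Metric.sphere (0:E) 1 × Set.Ioi (0:ℝ), f p.2
        ∂(μ.toSphere.prod (Measure.volumeIoiPow (Module.finrank ℝ E - 1)))
      = μ.toSphere Set.univ * ∫⁻ r, f r ∂(Measure.volumeIoiPow (Module.finrank ℝ E - 1)) := by
    rw [MeasureTheory.lintegral_prod _ hmeas.aemeasurable]
    simp [lintegral_const, mul_comm]
  have h5 : ∫⁻ r, f r ∂(Measure.volumeIoiPow (Module.finrank ℝ E - 1))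
      = ∫⁻ r in Set.Ioi (0:ℝ), ENNReal.ofReal (r ^ (Module.finrank ℝ E - 1)) * f r := by
    rw [Measure.volumeIoiPow,
      lintegral_withDensity_eq_lintegral_mul _
        ((measurable_subtype_coe.pow_const _).ennreal_ofReal)
        (show Measurable fun r : Set.Ioi (0:ℝ) => f ↑r from hf.comp measurable_subtype_coe)]
    rw [← lintegral_subtype_comap measurableSet_Ioi
      (fun r => ENNReal.ofReal (r ^ (Module.finrank ℝ E - 1)) * f r)]
    rfl
  rw [h1, h2, h3, h4, h5, Measure.toSphere_apply_univ, mul_assoc]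

theorem lintegral_ball_bracket {b : ℝ} (hb0 : 0 ≤ b) (hbd : b < Module.finrank ℝ E)
    {a : ℝ} (ha : 0 ≤ a) :
    ∫⁻ y in ball (0:E) a, ENNReal.ofReal ((1 + ‖y‖ ^ 2) ^ (-(b/2))) ∂μ
      ≤ (Module.finrank ℝ E : ℝ≥0∞) * μ (ball (0:E) 1)
        * ENNReal.ofReal (a ^ ((Module.finrank ℝ E : ℝ) - b) / ((Module.finrank ℝ E : ℝ) - b)) := by
  set n := Module.finrank ℝ E with hn
  have hn1 : 1 ≤ n := Module.finrank_pos
  have hnb : (0:ℝ) < (n:ℝ) - b := by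
    have : b < (n:ℝ) := hbd
    linarith
  set f : ℝ → ℝ≥0∞ := (Set.Ioo 0 a).indicator (fun r => ENNReal.ofReal (r ^ (-b))) with hf
  have hfm : Measurable f := Measurable.indicator (by fun_prop) measurableSet_Ioo
  have step1 : ∫⁻ y in ball (0:E) a, ENNReal.ofReal ((1 + ‖y‖ ^ 2) ^ (-(b/2))) ∂μ
      ≤ ∫⁻ y : E, f ‖y‖ ∂μ := by
    rw [← lintegral_indicator measurableSet_ball]
    refine lintegral_mono_ae ?_
    have h0 : ∀ᵐ (y : E) ∂μ, y ≠ 0 := by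
      rw [ae_iff]
      simpa using measure_singleton (0:E)
    filter_upwards [h0] with y hy
    by_cases hyb : y ∈ ball (0:E) a
    · rw [Set.indicator_of_mem hyb]
      have hmem : ‖y‖ ∈ Set.Ioo (0:ℝ) a := by
        constructor
        · simpa using hy
        · simpa [dist_eq_norm] using hyb
      rw [hf, Set.indicator_of_mem hmem]
      apply ENNReal.ofReal_le_ofReal
      have h2 : ‖y‖ ^ (-b) = ((‖y‖ ^ 2 : ℝ)) ^ (-(b/2)) := by
        rw [← Real.rpow_natCast ‖y‖ 2, ← Real.rpow_mul (norm_nonneg y)]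
        ring_nf
      rw [h2]
      apply Real.rpow_le_rpow_of_nonpos
      · have hy' : 0 < ‖y‖ := hmem.1
        positivity
      · linarith
      · linarith
    · rw [Set.indicator_of_notMem hyb]
      exact zero_le
  have step2 := lintegral_fun_norm_polar μ f hfm
  have step3 : ∫⁻ r in Set.Ioi (0:ℝ), ENNReal.ofReal (r ^ (n - 1)) * f r
      ≤ ENNReal.ofReal (a ^ ((n:ℝ) - b) / ((n:ℝ) - b)) := by
    have hcongr : ∀ r ∈ Set.Ioi (0:ℝ), ENNReal.ofReal (r ^ (n - 1)) * f r
        = (Set.Ioo (0:ℝ) a).indicator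
            (fun r => ENNReal.ofReal (r ^ ((n:ℝ) - 1 - b))) r := by
      intro r hr
      by_cases hmem : r ∈ Set.Ioo (0:ℝ) a
      · rw [hf, Set.indicator_of_mem hmem, Set.indicator_of_mem hmem,
          ← ENNReal.ofReal_mul (pow_nonneg hmem.1.le _)]
        congr 1
        rw [← Real.rpow_natCast r (n - 1), ← Real.rpow_add hmem.1]
        congr 1
        rw [Nat.cast_sub hn1]
        push_cast
        ring
      · rw [hf, Set.indicator_of_notMem hmem, Set.indicator_of_notMem hmem, mul_zero]
    rw [setLIntegral_congr_fun measurableSet_Ioi hcongr]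
    rw [lintegral_indicator measurableSet_Ioo, Measure.restrict_restrict measurableSet_Ioo,
      Set.inter_eq_left.2 (Set.Ioo_subset_Ioi_self)]
    have hint : IntegrableOn (fun r : ℝ => r ^ ((n:ℝ) - 1 - b)) (Set.Ioo 0 a) := by
      refine IntegrableOn.mono_set ?_ Set.Ioo_subset_Ioc_self
      have h1 : IntervalIntegrable (fun r : ℝ => r ^ ((n:ℝ) - 1 - b)) volume 0 a :=
        intervalIntegral.intervalIntegrable_rpow' (by linarith)
      exact (intervalIntegrable_iff_integrableOn_Ioc_of_le ha).1 h1
    rw [← ofReal_integral_eq_lintegral_ofReal hint]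
    · apply ENNReal.ofReal_le_ofReal
      have : ∫ r in Set.Ioo (0:ℝ) a, r ^ ((n:ℝ) - 1 - b)
          = ∫ r in (0:ℝ)..a, r ^ ((n:ℝ) - 1 - b) := by
        rw [intervalIntegral.integral_of_le ha, integral_Ioc_eq_integral_Ioo]
      rw [this, integral_rpow (Or.inl (by linarith))]
      rw [Real.zero_rpow (by linarith)]
      have he : (n:ℝ) - 1 - b + 1 = (n:ℝ) - b := by ring
      rw [he]
      simp
    · filter_upwards [ae_restrict_mem measurableSet_Ioo] with r hr
      exact Real.rpow_nonneg hr.1.le _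
  calc ∫⁻ y in ball (0:E) a, ENNReal.ofReal ((1 + ‖y‖ ^ 2) ^ (-(b/2))) ∂μ
      ≤ ∫⁻ y : E, f ‖y‖ ∂μ := step1
    _ = (n : ℝ≥0∞) * μ (ball (0:E) 1) * ∫⁻ r in Set.Ioi (0:ℝ), ENNReal.ofReal (r ^ (n - 1)) * f r := step2
    _ ≤ _ := mul_le_mul_right step3 _

theorem lintegral_compl_bracket {c : ℝ} (hc : (Module.finrank ℝ E : ℝ) < c)
    {a : ℝ} (ha : 1 ≤ a) :
    ∫⁻ y in {y : E | a ≤ ‖y‖}, ENNReal.ofReal ((1 + ‖y‖ ^ 2) ^ (-(c/2))) ∂μ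
      ≤ (Module.finrank ℝ E : ℝ≥0∞) * μ (ball (0:E) 1)
        * ENNReal.ofReal (a ^ ((Module.finrank ℝ E : ℝ) - c) / (c - (Module.finrank ℝ E : ℝ))) := by
  set n := Module.finrank ℝ E with hn
  have hn1 : 1 ≤ n := Module.finrank_pos
  have ha0 : (0:ℝ) < a := lt_of_lt_of_le one_pos ha
  have hc0 : (0:ℝ) ≤ c := le_of_lt (lt_of_le_of_lt (Nat.cast_nonneg n) hc)
  have hsm : MeasurableSet {y : E | a ≤ ‖y‖} := measurable_norm measurableSet_Ici
  set f : ℝ → ℝ≥0∞ := (Set.Ici a).indicator (fun r => ENNReal.ofReal (r ^ (-c))) with hf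
  have hfm : Measurable f := Measurable.indicator (by fun_prop) measurableSet_Ici
  have step1 : ∫⁻ y in {y : E | a ≤ ‖y‖}, ENNReal.ofReal ((1 + ‖y‖ ^ 2) ^ (-(c/2))) ∂μ
      ≤ ∫⁻ y : E, f ‖y‖ ∂μ := by
    rw [← lintegral_indicator hsm]
    refine lintegral_mono fun y => ?_
    by_cases hyb : y ∈ {y : E | a ≤ ‖y‖}
    · rw [Set.indicator_of_mem hyb]
      have hy : (0:ℝ) < ‖y‖ := lt_of_lt_of_le ha0 hyb
      rw [hf, Set.indicator_of_mem (show ‖y‖ ∈ Set.Ici a from hyb)]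
      apply ENNReal.ofReal_le_ofReal
      have h2 : ‖y‖ ^ (-c) = ((‖y‖ ^ 2 : ℝ)) ^ (-(c/2)) := by
        rw [← Real.rpow_natCast ‖y‖ 2, ← Real.rpow_mul (norm_nonneg y)]
        ring_nf
      rw [h2]
      apply Real.rpow_le_rpow_of_nonpos
      · positivity
      · linarith
      · linarith
    · rw [Set.indicator_of_notMem hyb]
      exact zero_le
  have step2 := lintegral_fun_norm_polar μ f hfm
  have step3 : ∫⁻ r in Set.Ioi (0:ℝ), ENNReal.ofReal (r ^ (n - 1)) * f r
      ≤ ENNReal.ofReal (a ^ ((n:ℝ) - c) / (c - (n:ℝ))) := by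
    have hcongr : ∀ r ∈ Set.Ioi (0:ℝ), ENNReal.ofReal (r ^ (n - 1)) * f r
        = (Set.Ici a).indicator (fun r => ENNReal.ofReal (r ^ ((n:ℝ) - 1 - c))) r := by
      intro r hr
      by_cases hmem : r ∈ Set.Ici a
      · rw [hf, Set.indicator_of_mem hmem, Set.indicator_of_mem hmem,
          ← ENNReal.ofReal_mul (pow_nonneg (le_of_lt hr) _)]
        congr 1
        rw [← Real.rpow_natCast r (n - 1), ← Real.rpow_add hr]
        congr 1
        rw [Nat.cast_sub hn1]
        push_cast
        ring
      · rw [hf, Set.indicator_of_notMem hmem, Set.indicator_of_notMem hmem, mul_zero]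
    rw [setLIntegral_congr_fun measurableSet_Ioi hcongr]
    rw [lintegral_indicator measurableSet_Ici, Measure.restrict_restrict measurableSet_Ici]
    have hie : Set.Ici a ∩ Set.Ioi (0:ℝ) = Set.Ici a :=
      Set.inter_eq_left.2 (fun r hr => lt_of_lt_of_le ha0 hr)
    rw [hie, Measure.restrict_congr_set Ioi_ae_eq_Ici.symm]
    have hint : IntegrableOn (fun r : ℝ => r ^ ((n:ℝ) - 1 - c)) (Set.Ioi a) :=
      integrableOn_Ioi_rpow_of_lt (by linarith) ha0
    rw [← ofReal_integral_eq_lintegral_ofReal hint]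
    · apply ENNReal.ofReal_le_ofReal
      rw [integral_Ioi_rpow_of_lt (by linarith) ha0]
      have he : (n:ℝ) - 1 - c + 1 = (n:ℝ) - c := by ring
      rw [he]
      rw [neg_div, ← div_neg]
      have : -((n:ℝ) - c) = c - (n:ℝ) := by ring
      rw [this]
    · filter_upwards [ae_restrict_mem measurableSet_Ioi] with r hr
      exact Real.rpow_nonneg (le_of_lt (lt_trans ha0 hr)) _
  calc ∫⁻ y in {y : E | a ≤ ‖y‖}, ENNReal.ofReal ((1 + ‖y‖ ^ 2) ^ (-(c/2))) ∂μ
      ≤ ∫⁻ y : E, f ‖y‖ ∂μ := step1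
    _ = (n : ℝ≥0∞) * μ (ball (0:E) 1) * ∫⁻ r in Set.Ioi (0:ℝ), ENNReal.ofReal (r ^ (n - 1)) * f r := step2
    _ ≤ _ := mul_le_mul_right step3 _

section main

open scoped ENNReal

lemma sq_le_rpow_half {t J e : ℝ} (ht : 0 ≤ t) (he : 0 ≤ e) (h : t ^ 2 ≤ J) :
    t ^ e ≤ J ^ (e / 2) := by
  have h1 : t ^ e = ((t ^ 2 : ℝ)) ^ (e / 2) := by
    rw [← Real.rpow_natCast t 2, ← Real.rpow_mul ht]
    congr 1
    push_cast
    ring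
  rw [h1]
  exact Real.rpow_le_rpow (by positivity) h (by positivity)

lemma div_rpow_neg {X c e : ℝ} (hX : 0 < X) (hc : 0 < c) :
    (X / c) ^ (-e) = c ^ e * X ^ (-e) := by
  rw [Real.div_rpow hX.le hc.le, Real.rpow_neg hc.le, div_eq_mul_inv, inv_inv]
  ring

lemma rpow_add_neg_half {J u v : ℝ} (hJ : 0 < J) :
    J ^ (-(u/2)) * J ^ ((v : ℝ)/2) = J ^ ((v - u)/2) := by
  rw [← Real.rpow_add hJ]
  congr 1
  ring

set_option maxHeartbeats 2000000 in
theorem stmt_0 (d : ℕ) (hd : 1 ≤ d) (α β : ℝ) (hα0 : 0 ≤ α) (hβ0 : 0 ≤ β)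
    (hα : α < d) (hβ : β < d) (hαβ : (d : ℝ) < α + β) :
    ∃ C : ℝ, 0 < C ∧ ∀ x : EuclideanSpace ℝ (Fin d),
      (∫ y : EuclideanSpace ℝ (Fin d),
          (1 + ‖x - y‖ ^ 2) ^ (-(α / 2)) * (1 + ‖y‖ ^ 2) ^ (-(β / 2)))
        ≤ C * (1 + ‖x‖ ^ 2) ^ (-((α + β - d) / 2)) := by
  classical
  set E := EuclideanSpace ℝ (Fin d) with hE
  have hrank : Module.finrank ℝ E = d := finrank_euclideanSpace_fin
  haveI : Nontrivial E := Module.nontrivial_of_finrank_pos (R := ℝ) (by omega)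
  set s : ℝ := α + β - d with hs
  have hs0 : 0 < s := by simp only [hs]; linarith
  set γ : ℝ := α + β with hγ
  have hγd : (d : ℝ) < γ := hαβ
  -- basic brackets
  set brα : E → ℝ := fun z => (1 + ‖z‖ ^ 2) ^ (-(α / 2)) with hbrα
  set brβ : E → ℝ := fun z => (1 + ‖z‖ ^ 2) ^ (-(β / 2)) with hbrβ
  set brγ : E → ℝ := fun z => (1 + ‖z‖ ^ 2) ^ (-(γ / 2)) with hbrγ
  have hbase : ∀ z : E, (0:ℝ) < 1 + ‖z‖ ^ 2 := fun z => by positivity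
  have hbrγm : Measurable fun z : E => ENNReal.ofReal (brγ z) := by
    apply Measurable.ennreal_ofReal
    apply Continuous.measurable
    exact (continuous_const.add ((continuous_norm).pow 2)).rpow_const
      (fun z => Or.inl (ne_of_gt (hbase z)))
  have hbrβm : Measurable fun z : E => ENNReal.ofReal (brβ z) := by
    apply Measurable.ennreal_ofReal
    apply Continuous.measurable
    exact (continuous_const.add ((continuous_norm).pow 2)).rpow_const
      (fun z => Or.inl (ne_of_gt (hbase z)))
  have hbrαm : Measurable fun z : E => ENNReal.ofReal (brα z) := by
    apply Measurable.ennreal_ofReal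
    apply Continuous.measurable
    exact (continuous_const.add ((continuous_norm).pow 2)).rpow_const
      (fun z => Or.inl (ne_of_gt (hbase z)))
  -- brackets are multiplicative
  have hmulγ : ∀ z : E, brα z * brβ z = brγ z := by
    intro z
    rw [hbrα, hbrβ, hbrγ, ← Real.rpow_add (hbase z)]
    congr 1
    simp only [hγ]
    ring
  -- monotone in the norm
  have hmono : ∀ (e : ℝ), 0 ≤ e → ∀ z w : E, ‖z‖ ≤ ‖w‖ →
      (1 + ‖w‖ ^ 2) ^ (-(e/2)) ≤ (1 + ‖z‖ ^ 2) ^ (-(e/2)) := by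
    intro e he z w hzw
    apply Real.rpow_le_rpow_of_nonpos (hbase z)
    · nlinarith [norm_nonneg z, norm_nonneg w]
    · linarith
  -- the fixed constants
  set K : ℝ≥0∞ := (d : ℝ≥0∞) * volume (ball (0:E) 1) with hK
  have hKlt : K < ⊤ :=
    ENNReal.mul_lt_top (ENNReal.natCast_lt_top d) measure_ball_lt_top
  set Kr : ℝ := K.toReal with hKr
  have hKr0 : 0 ≤ Kr := ENNReal.toReal_nonneg
  have hKofReal : K = ENNReal.ofReal Kr := (ENNReal.ofReal_toReal hKlt.ne).symm
  -- integral of the full bracket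
  set L0 : ℝ≥0∞ := ∫⁻ y : E, ENNReal.ofReal (brγ y) with hL0
  have hL0lt : L0 < ⊤ := by
    have hint : Integrable (fun y : E => (1 + ‖y‖ ^ 2) ^ (-γ / 2)) (volume : Measure E) :=
      integrable_rpow_neg_one_add_norm_sq (by rw [hrank]; exact hγd)
    have := hint.2
    rw [HasFiniteIntegral, lintegral_enorm_of_nonneg
      (fun y => Real.rpow_nonneg (hbase y).le _)] at this
    simpa [hL0, hbrγ, neg_div] using this
  set L0r : ℝ := L0.toReal with hL0r
  have hL0r0 : 0 ≤ L0r := ENNReal.toReal_nonneg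
  have hL0ofReal : L0 = ENNReal.ofReal L0r := (ENNReal.ofReal_toReal hL0lt.ne).symm
  set M : ℝ := 10 ^ (α/2) * L0r * 5 ^ (s/2) with hM
  set C1 : ℝ := 4 ^ (α/2) * Kr / (d - β) with hC1
  set C2 : ℝ := 4 ^ (β/2) * Kr / (d - α) with hC2
  set C3 : ℝ := Kr * 5 ^ (s/2) / s with hC3
  set C : ℝ := M + C1 + C2 + C3 + C3 + 1 with hC
  have hM0 : 0 ≤ M := by positivity
  have hC10 : 0 ≤ C1 := by
    have : (0:ℝ) < d - β := by linarith
    positivity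
  have hC20 : 0 ≤ C2 := by
    have : (0:ℝ) < d - α := by linarith
    positivity
  have hC30 : 0 ≤ C3 := by positivity
  have hCpos : 0 < C := by positivity
  refine ⟨C, hCpos, fun x => ?_⟩
  set J : ℝ := 1 + ‖x‖ ^ 2 with hJ
  have hJ0 : 0 < J := hbase x
  have hJpow : (0:ℝ) < J ^ (-(s/2)) := Real.rpow_pos_of_pos hJ0 _
  -- the key lintegral estimate

  have key : ∫⁻ y : E, ENNReal.ofReal (brα (x - y) * brβ y)
      ≤ ENNReal.ofReal (C * J ^ (-(s/2))) := by
    have hbrα0 : ∀ z : E, 0 ≤ brα z := fun z => Real.rpow_nonneg (hbase z).le _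
    have hbrβ0 : ∀ z : E, 0 ≤ brβ z := fun z => Real.rpow_nonneg (hbase z).le _
    have hbrγ0 : ∀ z : E, 0 ≤ brγ z := fun z => Real.rpow_nonneg (hbase z).le _
    rcases le_or_gt ‖x‖ 2 with hx2 | hx2
    · -- small x
      have hJ5 : J ≤ 5 := by
        simp only [hJ]
        nlinarith [norm_nonneg x]
      have hpt : ∀ y : E, ENNReal.ofReal (brα (x - y) * brβ y)
          ≤ ENNReal.ofReal ((10:ℝ) ^ (α/2)) * ENNReal.ofReal (brγ y) := by
        intro y
        rw [← ENNReal.ofReal_mul (by positivity)]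
        apply ENNReal.ofReal_le_ofReal
        have htri : ‖y‖ ≤ ‖x‖ + ‖x - y‖ := by
          have := norm_sub_le x (x - y)
          rwa [sub_sub_cancel] at this
        have h10 : (1 + ‖y‖ ^ 2) / 10 ≤ 1 + ‖x - y‖ ^ 2 := by
          have hy2 : ‖y‖ ^ 2 ≤ (‖x‖ + ‖x - y‖) ^ 2 := by
            apply pow_le_pow_left₀ (norm_nonneg y) htri 2
          nlinarith [norm_nonneg (x - y), norm_nonneg x, sq_nonneg (‖x - y‖ - 2)]
        have hb1 : brα (x - y) ≤ (10:ℝ) ^ (α/2) * (1 + ‖y‖ ^ 2) ^ (-(α/2)) := by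
          have h1 : brα (x - y) ≤ ((1 + ‖y‖ ^ 2) / 10) ^ (-(α/2)) :=
            Real.rpow_le_rpow_of_nonpos (by positivity) h10 (by linarith)
          rwa [div_rpow_neg (hbase y) (by norm_num)] at h1
        calc brα (x - y) * brβ y ≤ ((10:ℝ) ^ (α/2) * (1 + ‖y‖ ^ 2) ^ (-(α/2))) * brβ y :=
              mul_le_mul_of_nonneg_right hb1 (hbrβ0 y)
          _ = (10:ℝ) ^ (α/2) * (brα y * brβ y) := by rw [hbrα]; ring
          _ = (10:ℝ) ^ (α/2) * brγ y := by rw [hmulγ y]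
      calc ∫⁻ y : E, ENNReal.ofReal (brα (x - y) * brβ y)
          ≤ ∫⁻ y : E, ENNReal.ofReal ((10:ℝ) ^ (α/2)) * ENNReal.ofReal (brγ y) :=
            lintegral_mono hpt
        _ = ENNReal.ofReal ((10:ℝ) ^ (α/2)) * L0 := by
            rw [lintegral_const_mul _ hbrγm]
        _ = ENNReal.ofReal ((10:ℝ) ^ (α/2) * L0r) := by
            rw [hL0ofReal, ← ENNReal.ofReal_mul (by positivity)]
        _ ≤ ENNReal.ofReal (C * J ^ (-(s/2))) := by
            apply ENNReal.ofReal_le_ofReal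
            have h5J : (5:ℝ) ^ (-(s/2)) ≤ J ^ (-(s/2)) :=
              Real.rpow_le_rpow_of_nonpos hJ0 hJ5 (by linarith)
            have h55 : (5:ℝ) ^ (s/2) * (5:ℝ) ^ (-(s/2)) = 1 := by
              rw [← Real.rpow_add (by norm_num)]
              norm_num
            have hMC : M ≤ C := by
              simp only [hC]
              linarith
            calc (10:ℝ) ^ (α/2) * L0r = M * (5:ℝ) ^ (-(s/2)) := by
                  rw [hM]
                  linear_combination (-((10:ℝ) ^ (α/2) * L0r)) * h55
              _ ≤ M * J ^ (-(s/2)) := mul_le_mul_of_nonneg_left h5J hM0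
              _ ≤ C * J ^ (-(s/2)) := mul_le_mul_of_nonneg_right hMC hJpow.le
    · -- large x
      set a : ℝ := ‖x‖ / 2 with haa
      have ha1 : 1 ≤ a := by simp only [haa]; linarith
      have ha0 : 0 < a := lt_of_lt_of_le one_pos ha1
      have haJ : a ^ 2 ≤ J := by
        simp only [haa, hJ]
        nlinarith [norm_nonneg x]
      have hJ5a : J ≤ 5 * a ^ 2 := by
        simp only [haa, hJ]
        nlinarith
      set c1 : ℝ := 4 ^ (α/2) * J ^ (-(α/2)) with hc1
      set c2 : ℝ := 4 ^ (β/2) * J ^ (-(β/2)) with hc2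
      have hc10 : 0 ≤ c1 := by positivity
      have hc20 : 0 ≤ c2 := by positivity
      set Hβ : E → ℝ≥0∞ := (ball (0:E) a).indicator (fun z => ENNReal.ofReal (brβ z)) with hHβ
      set Hα : E → ℝ≥0∞ := (ball (0:E) a).indicator (fun z => ENNReal.ofReal (brα z)) with hHα
      set Hγ : E → ℝ≥0∞ := ({z : E | a ≤ ‖z‖}).indicator (fun z => ENNReal.ofReal (brγ z)) with hHγ
      have hsγ : MeasurableSet {z : E | a ≤ ‖z‖} := measurable_norm measurableSet_Ici
      have hHβm : Measurable Hβ := hbrβm.indicator measurableSet_ball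
      have hHαm : Measurable Hα := hbrαm.indicator measurableSet_ball
      have hHγm : Measurable Hγ := hbrγm.indicator hsγ
      have hsub : Measurable fun y : E => x - y := measurable_const.sub measurable_id
      have hHαc : Measurable fun y : E => Hα (x - y) := hHαm.comp hsub
      have hHγc : Measurable fun y : E => Hγ (x - y) := hHγm.comp hsub
      have hmp : MeasurePreserving (fun y : E => x - y) volume volume :=
        Measure.measurePreserving_sub_left volume x
      have hpt : ∀ y : E, ENNReal.ofReal (brα (x - y) * brβ y)
          ≤ ENNReal.ofReal c1 * Hβ y + ENNReal.ofReal c2 * Hα (x - y)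
            + Hγ y + Hγ (x - y) := by
        intro y
        by_cases hy1 : ‖y‖ < a
        · refine le_trans ?_ (le_add_right (le_add_right le_self_add))
          have hxy : a ≤ ‖x - y‖ := by
            have htri : ‖x‖ ≤ ‖x - y‖ + ‖y‖ := by
              have := norm_add_le (x - y) y
              rwa [sub_add_cancel] at this
            simp only [haa] at *
            linarith
          have hJ4 : J / 4 ≤ 1 + ‖x - y‖ ^ 2 := by
            have h2 : a ^ 2 ≤ ‖x - y‖ ^ 2 := pow_le_pow_left₀ ha0.le hxy 2
            simp only [haa, hJ] at h2 ⊢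
            nlinarith
          have hb1 : brα (x - y) ≤ c1 := by
            have h1 : brα (x - y) ≤ (J / 4) ^ (-(α/2)) :=
              Real.rpow_le_rpow_of_nonpos (by positivity) hJ4 (by linarith)
            rwa [div_rpow_neg hJ0 (by norm_num)] at h1
          have : brα (x - y) * brβ y ≤ c1 * brβ y :=
            mul_le_mul_of_nonneg_right hb1 (hbrβ0 y)
          calc ENNReal.ofReal (brα (x - y) * brβ y) ≤ ENNReal.ofReal (c1 * brβ y) :=
                ENNReal.ofReal_le_ofReal this
            _ = ENNReal.ofReal c1 * ENNReal.ofReal (brβ y) := ENNReal.ofReal_mul hc10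
            _ = ENNReal.ofReal c1 * Hβ y := by
                rw [hHβ, Set.indicator_of_mem (mem_ball_zero_iff.2 hy1)]
        · by_cases hy2 : ‖x - y‖ < a
          · refine le_trans ?_ (le_add_right (le_add_right le_add_self))
            have hxy : a ≤ ‖y‖ := not_lt.1 hy1
            have hJ4 : J / 4 ≤ 1 + ‖y‖ ^ 2 := by
              have h2 : a ^ 2 ≤ ‖y‖ ^ 2 := pow_le_pow_left₀ ha0.le hxy 2
              simp only [haa, hJ] at h2 ⊢
              nlinarith
            have hb2 : brβ y ≤ c2 := by
              have h1 : brβ y ≤ (J / 4) ^ (-(β/2)) :=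
                Real.rpow_le_rpow_of_nonpos (by positivity) hJ4 (by linarith)
              rwa [div_rpow_neg hJ0 (by norm_num)] at h1
            have : brα (x - y) * brβ y ≤ c2 * brα (x - y) := by
              have := mul_le_mul_of_nonneg_left hb2 (hbrα0 (x - y))
              linarith [this]
            calc ENNReal.ofReal (brα (x - y) * brβ y) ≤ ENNReal.ofReal (c2 * brα (x - y)) :=
                  ENNReal.ofReal_le_ofReal this
              _ = ENNReal.ofReal c2 * ENNReal.ofReal (brα (x - y)) := ENNReal.ofReal_mul hc20
              _ = ENNReal.ofReal c2 * Hα (x - y) := by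
                  rw [hHα, Set.indicator_of_mem (mem_ball_zero_iff.2 hy2)]
          · have hay : a ≤ ‖y‖ := not_lt.1 hy1
            have haxy : a ≤ ‖x - y‖ := not_lt.1 hy2
            by_cases h34 : ‖y‖ ≤ ‖x - y‖
            · refine le_trans ?_ (le_add_right le_add_self)
              have hb : brα (x - y) ≤ brα y := hmono α hα0 y (x - y) h34
              have hprod : brα (x - y) * brβ y ≤ brγ y := by
                calc brα (x - y) * brβ y ≤ brα y * brβ y :=
                      mul_le_mul_of_nonneg_right hb (hbrβ0 y)
                  _ = brγ y := hmulγ y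
              calc ENNReal.ofReal (brα (x - y) * brβ y) ≤ ENNReal.ofReal (brγ y) :=
                    ENNReal.ofReal_le_ofReal hprod
                _ = Hγ y := by rw [hHγ, Set.indicator_of_mem (by exact hay)]
            · refine le_trans ?_ le_add_self
              have hb : brβ y ≤ brβ (x - y) := hmono β hβ0 (x - y) y (le_of_not_ge h34)
              have hprod : brα (x - y) * brβ y ≤ brγ (x - y) := by
                calc brα (x - y) * brβ y ≤ brα (x - y) * brβ (x - y) :=
                      mul_le_mul_of_nonneg_left hb (hbrα0 (x - y))
                  _ = brγ (x - y) := hmulγ (x - y)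
              calc ENNReal.ofReal (brα (x - y) * brβ y) ≤ ENNReal.ofReal (brγ (x - y)) :=
                    ENNReal.ofReal_le_ofReal hprod
                _ = Hγ (x - y) := by rw [hHγ, Set.indicator_of_mem (by exact haxy)]
      -- integrate the pointwise bound
      have hint : ∫⁻ y : E, ENNReal.ofReal (brα (x - y) * brβ y)
          ≤ ENNReal.ofReal c1 * (∫⁻ y in ball (0:E) a, ENNReal.ofReal (brβ y))
            + ENNReal.ofReal c2 * (∫⁻ y in ball (0:E) a, ENNReal.ofReal (brα y))
            + (∫⁻ y in {z : E | a ≤ ‖z‖}, ENNReal.ofReal (brγ y))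
            + (∫⁻ y in {z : E | a ≤ ‖z‖}, ENNReal.ofReal (brγ y)) := by
        calc ∫⁻ y : E, ENNReal.ofReal (brα (x - y) * brβ y)
            ≤ ∫⁻ y : E, (ENNReal.ofReal c1 * Hβ y + ENNReal.ofReal c2 * Hα (x - y)
              + Hγ y + Hγ (x - y)) := lintegral_mono hpt
          _ = (∫⁻ y : E, (ENNReal.ofReal c1 * Hβ y + ENNReal.ofReal c2 * Hα (x - y) + Hγ y))
              + (∫⁻ y : E, Hγ (x - y)) := by
              rw [lintegral_add_left (show Measurable fun y => ENNReal.ofReal c1 * Hβ y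
                + ENNReal.ofReal c2 * Hα (x - y) + Hγ y from ((hHβm.const_mul _).add
                (hHαc.const_mul _)).add hHγm)]
          _ = (∫⁻ y : E, (ENNReal.ofReal c1 * Hβ y + ENNReal.ofReal c2 * Hα (x - y)))
              + (∫⁻ y : E, Hγ y) + (∫⁻ y : E, Hγ (x - y)) := by
              rw [lintegral_add_left (show Measurable fun y => ENNReal.ofReal c1 * Hβ y
                + ENNReal.ofReal c2 * Hα (x - y) from (hHβm.const_mul _).add
                (hHαc.const_mul _))]
          _ = (∫⁻ y : E, ENNReal.ofReal c1 * Hβ y) + (∫⁻ y : E, ENNReal.ofReal c2 * Hα (x - y))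
              + (∫⁻ y : E, Hγ y) + (∫⁻ y : E, Hγ (x - y)) := by
              rw [lintegral_add_left (hHβm.const_mul _)]
          _ = _ := by
              have e1 : (∫⁻ y : E, Hγ (x - y)) = ∫⁻ y : E, Hγ y := hmp.lintegral_comp hHγm
              have e2 : (∫⁻ y : E, ENNReal.ofReal c2 * Hα (x - y))
                  = ENNReal.ofReal c2 * ∫⁻ y : E, Hα (x - y) :=
                lintegral_const_mul _ hHαc
              have e3 : (∫⁻ y : E, Hα (x - y)) = ∫⁻ y : E, Hα y := hmp.lintegral_comp hHαm
              rw [e1, e2, e3, lintegral_const_mul _ hHβm]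
              rw [hHβ, hHα, hHγ, lintegral_indicator measurableSet_ball,
                lintegral_indicator measurableSet_ball, lintegral_indicator hsγ]
      -- bound each of the four pieces
      have hdβ : (0:ℝ) < (d:ℝ) - β := by linarith
      have hdα : (0:ℝ) < (d:ℝ) - α := by linarith
      have hLβ := lintegral_ball_bracket (volume : Measure E) hβ0
        (by rw [hrank]; exact hβ) ha0.le
      have hLα := lintegral_ball_bracket (volume : Measure E) hα0
        (by rw [hrank]; exact hα) ha0.le
      have hLγ := lintegral_compl_bracket (volume : Measure E)
        (by rw [hrank]; exact hγd) ha1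
      rw [hrank] at hLβ hLα hLγ
      -- convert K to ofReal
      rw [← hK, hKofReal] at hLβ hLα hLγ
      have hexpβ : J ^ (-(α/2)) * J ^ (((d:ℝ) - β)/2) = J ^ (-(s/2)) := by
        rw [← Real.rpow_add hJ0]
        congr 1
        simp only [hs]
        ring
      have hexpα : J ^ (-(β/2)) * J ^ (((d:ℝ) - α)/2) = J ^ (-(s/2)) := by
        rw [← Real.rpow_add hJ0]
        congr 1
        simp only [hs]
        ring
      have haβ : a ^ ((d:ℝ) - β) ≤ J ^ (((d:ℝ) - β)/2) :=
        sq_le_rpow_half ha0.le (by linarith) haJ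
      have haα : a ^ ((d:ℝ) - α) ≤ J ^ (((d:ℝ) - α)/2) :=
        sq_le_rpow_half ha0.le (by linarith) haJ
      have haγ : a ^ ((d:ℝ) - γ) ≤ 5 ^ (s/2) * J ^ (-(s/2)) := by
        have h1 : (5 * a ^ 2) ^ (-(s/2)) ≤ J ^ (-(s/2)) :=
          Real.rpow_le_rpow_of_nonpos hJ0 hJ5a (by linarith)
        have h2 : (5 * a ^ 2 : ℝ) ^ (-(s/2)) = 5 ^ (-(s/2)) * a ^ ((d:ℝ) - γ) := by
          rw [Real.mul_rpow (by norm_num) (by positivity)]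
          congr 1
          rw [← Real.rpow_natCast a 2, ← Real.rpow_mul ha0.le]
          congr 1
          simp only [hs, hγ]
          push_cast
          ring
        have h55 : (5:ℝ) ^ (s/2) * (5:ℝ) ^ (-(s/2)) = 1 := by
          rw [← Real.rpow_add (by norm_num)]
          norm_num
        calc a ^ ((d:ℝ) - γ) = 5 ^ (s/2) * (5 ^ (-(s/2)) * a ^ ((d:ℝ) - γ)) := by
              rw [← mul_assoc, h55, one_mul]
          _ = 5 ^ (s/2) * (5 * a ^ 2 : ℝ) ^ (-(s/2)) := by rw [h2]
          _ ≤ 5 ^ (s/2) * J ^ (-(s/2)) := by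
              apply mul_le_mul_of_nonneg_left h1 (by positivity)
      -- real-side bounds for the four pieces
      have hb1 : ENNReal.ofReal c1 * (ENNReal.ofReal Kr
            * ENNReal.ofReal (a ^ ((d:ℝ) - β) / ((d:ℝ) - β)))
          ≤ ENNReal.ofReal (C1 * J ^ (-(s/2))) := by
        rw [← ENNReal.ofReal_mul hKr0, ← ENNReal.ofReal_mul hc10]
        apply ENNReal.ofReal_le_ofReal
        have step : c1 * (Kr * (a ^ ((d:ℝ) - β) / ((d:ℝ) - β)))
            ≤ c1 * (Kr * (J ^ (((d:ℝ) - β)/2) / ((d:ℝ) - β))) := by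
          gcongr
        refine le_trans step (le_of_eq ?_)
        rw [hc1, hC1]
        rw [show 4 ^ (α/2) * J ^ (-(α/2)) * (Kr * (J ^ (((d:ℝ) - β)/2) / ((d:ℝ) - β)))
            = (4 ^ (α/2) * Kr / ((d:ℝ) - β)) * (J ^ (-(α/2)) * J ^ (((d:ℝ) - β)/2)) by ring]
        rw [hexpβ]
      have hb2 : ENNReal.ofReal c2 * (ENNReal.ofReal Kr
            * ENNReal.ofReal (a ^ ((d:ℝ) - α) / ((d:ℝ) - α)))
          ≤ ENNReal.ofReal (C2 * J ^ (-(s/2))) := by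
        rw [← ENNReal.ofReal_mul hKr0, ← ENNReal.ofReal_mul hc20]
        apply ENNReal.ofReal_le_ofReal
        have step : c2 * (Kr * (a ^ ((d:ℝ) - α) / ((d:ℝ) - α)))
            ≤ c2 * (Kr * (J ^ (((d:ℝ) - α)/2) / ((d:ℝ) - α))) := by
          gcongr
        refine le_trans step (le_of_eq ?_)
        rw [hc2, hC2]
        rw [show 4 ^ (β/2) * J ^ (-(β/2)) * (Kr * (J ^ (((d:ℝ) - α)/2) / ((d:ℝ) - α)))
            = (4 ^ (β/2) * Kr / ((d:ℝ) - α)) * (J ^ (-(β/2)) * J ^ (((d:ℝ) - α)/2)) by ring]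
        rw [hexpα]
      have hb3 : ENNReal.ofReal Kr * ENNReal.ofReal (a ^ ((d:ℝ) - γ) / (γ - (d:ℝ)))
          ≤ ENNReal.ofReal (C3 * J ^ (-(s/2))) := by
        rw [← ENNReal.ofReal_mul hKr0]
        apply ENNReal.ofReal_le_ofReal
        have hγd' : γ - (d:ℝ) = s := by rw [hs]
        rw [hγd']
        have step : Kr * (a ^ ((d:ℝ) - γ) / s)
            ≤ Kr * ((5 ^ (s/2) * J ^ (-(s/2))) / s) := by
          gcongr
        refine le_trans step (le_of_eq ?_)
        rw [hC3]
        ring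
      calc ∫⁻ y : E, ENNReal.ofReal (brα (x - y) * brβ y)
          ≤ _ := hint
        _ ≤ ENNReal.ofReal (C1 * J ^ (-(s/2))) + ENNReal.ofReal (C2 * J ^ (-(s/2)))
            + ENNReal.ofReal (C3 * J ^ (-(s/2))) + ENNReal.ofReal (C3 * J ^ (-(s/2))) := by
            refine add_le_add (add_le_add (add_le_add ?_ ?_) ?_) ?_
            · exact le_trans (mul_le_mul_right hLβ _) hb1
            · exact le_trans (mul_le_mul_right hLα _) hb2
            · exact le_trans hLγ hb3
            · exact le_trans hLγ hb3
        _ = ENNReal.ofReal (C1 * J ^ (-(s/2)) + C2 * J ^ (-(s/2))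
              + C3 * J ^ (-(s/2)) + C3 * J ^ (-(s/2))) := by
            rw [← ENNReal.ofReal_add (by positivity) (by positivity),
              ← ENNReal.ofReal_add (by positivity) (by positivity),
              ← ENNReal.ofReal_add (by positivity) (by positivity)]
        _ ≤ ENNReal.ofReal (C * J ^ (-(s/2))) := by
            apply ENNReal.ofReal_le_ofReal
            have hsum : C1 + C2 + C3 + C3 ≤ C := by simp only [hC]; linarith
            nlinarith [hJpow.le, hJpow]
  -- conclude
  have hFm : AEStronglyMeasurable (fun y : E => brα (x - y) * brβ y) volume := by
    apply Continuous.aestronglyMeasurable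
    apply Continuous.mul
    · exact ((continuous_const.add (((continuous_const.sub continuous_id).norm).pow 2)).rpow_const
        (fun z => Or.inl (ne_of_gt (hbase _))))
    · exact ((continuous_const.add ((continuous_norm).pow 2)).rpow_const
        (fun z => Or.inl (ne_of_gt (hbase _))))
  have hFpos : 0 ≤ᵐ[volume] fun y : E => brα (x - y) * brβ y := by
    filter_upwards with y
    have := Real.rpow_nonneg (hbase (x - y)).le (-(α/2))
    have := Real.rpow_nonneg (hbase y).le (-(β/2))
    exact mul_nonneg ‹_› ‹_›
  rw [show (∫ y : E, (1 + ‖x - y‖ ^ 2) ^ (-(α / 2)) * (1 + ‖y‖ ^ 2) ^ (-(β / 2)))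
      = ∫ y : E, brα (x - y) * brβ y from rfl]
  rw [integral_eq_lintegral_of_nonneg_ae hFpos hFm]
  have hC' : (0:ℝ) ≤ C * J ^ (-(s/2)) := mul_nonneg hCpos.le hJpow.le
  have := ENNReal.toReal_le_of_le_ofReal hC' key
  exact this

end main
end

section
/- Let d ≥ 1, α ∈ (d/4, d/2), s > d/2 − α and κ ≥ 0 with 4s − 2κ + 4α − 2d > 0. Then ∬_{ℝ^d×ℝ^d, |ξ₁|>1, |ξ₁−ξ₂|<|ξ₂|} (1+|ξ₁|²)^{-(2s-κ)} (1+|ξ₁−ξ₂|²)^{-α} (1+|ξ₂|²)^{-α} (1+|κ(ξ)|)^{-1} dξ₁ dξ₂ < ∞, where κ(ξ) = |ξ₁|² − |ξ₁−ξ₂|² + |ξ₂|². -/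
open MeasureTheory
open scoped ENNReal

lemma aux_fin (d : ℕ) (r : ℝ) (h : (d : ℝ) < 2 * r) :
    (∫⁻ x : EuclideanSpace ℝ (Fin d), ENNReal.ofReal ((1 + ‖x‖ ^ 2) ^ (-r))) < ⊤ := by
  have hint : Integrable (fun x : EuclideanSpace ℝ (Fin d) => (1 + ‖x‖ ^ 2) ^ (-(2*r) / 2)) := by
    apply integrable_rpow_neg_one_add_norm_sq
    rw [finrank_euclideanSpace_fin]
    linarith
  have he : -(2*r)/2 = -r := by ring
  rw [he] at hint
  exact hint.lintegral_lt_top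

lemma aux_cont (d : ℕ) (r : ℝ) :
    Continuous (fun x : EuclideanSpace ℝ (Fin d) => (1 + ‖x‖ ^ 2) ^ (-r)) := by
  apply Continuous.rpow_const (by fun_prop)
  intro x
  left
  positivity

lemma aux_meas (d : ℕ) (r : ℝ) :
    Measurable (fun x : EuclideanSpace ℝ (Fin d) => ENNReal.ofReal ((1 + ‖x‖ ^ 2) ^ (-r))) :=
  (aux_cont d r).measurable.ennreal_ofReal

lemma aux_trans (d : ℕ) (x : EuclideanSpace ℝ (Fin d)) (f : EuclideanSpace ℝ (Fin d) → ℝ≥0∞)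
    (hf : Measurable f) : ∫⁻ y, f (x - y) = ∫⁻ y, f y :=
  (Measure.measurePreserving_sub_left volume x).lintegral_comp hf

lemma aux_pow (d : ℕ) (r e : ℝ) (he : 0 ≤ e) (z : EuclideanSpace ℝ (Fin d)) :
    (ENNReal.ofReal ((1 + ‖z‖ ^ 2) ^ (-r))) ^ e
      = ENNReal.ofReal ((1 + ‖z‖ ^ 2) ^ (-(r * e))) := by
  rw [ENNReal.ofReal_rpow_of_nonneg (by positivity) he]
  congr 1
  rw [← Real.rpow_mul (by positivity)]
  congr 1
  ring

/-- The main product-integral finiteness via Hölder. -/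
lemma aux_assemble (d : ℕ) (rA αB αC pe qe : ℝ) (hpq : Real.HolderConjugate pe qe)
    (hrA : (d : ℝ) < 2 * rA) (hB2 : (d : ℝ) < 2 * (αB * pe)) (hC2 : (d : ℝ) < 2 * (αC * qe)) :
    (∫⁻ p : EuclideanSpace ℝ (Fin d) × EuclideanSpace ℝ (Fin d),
        ENNReal.ofReal ((1 + ‖p.1‖ ^ 2) ^ (-rA)) *
          (ENNReal.ofReal ((1 + ‖p.1 - p.2‖ ^ 2) ^ (-αB)) *
            ENNReal.ofReal ((1 + ‖p.2‖ ^ 2) ^ (-αC)))) < ⊤ := by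
  have hpe0 : (0:ℝ) ≤ pe := le_of_lt hpq.pos
  have hqe0 : (0:ℝ) ≤ qe := le_of_lt hpq.symm.pos
  set IB : ℝ≥0∞ := ∫⁻ z : EuclideanSpace ℝ (Fin d),
      ENNReal.ofReal ((1 + ‖z‖ ^ 2) ^ (-(αB * pe))) with hIB
  set IC : ℝ≥0∞ := ∫⁻ z : EuclideanSpace ℝ (Fin d),
      ENNReal.ofReal ((1 + ‖z‖ ^ 2) ^ (-(αC * qe))) with hIC
  have hIBfin : IB < ⊤ := aux_fin d _ hB2
  have hICfin : IC < ⊤ := aux_fin d _ hC2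
  set K : ℝ≥0∞ := IB ^ (1/pe) * IC ^ (1/qe) with hK
  have hKfin : K ≠ ⊤ :=
    (ENNReal.mul_lt_top (ENNReal.rpow_lt_top_of_nonneg (by positivity) hIBfin.ne)
      (ENNReal.rpow_lt_top_of_nonneg (by positivity) hICfin.ne)).ne
  have hmeasF : Measurable (fun p : EuclideanSpace ℝ (Fin d) × EuclideanSpace ℝ (Fin d) =>
      ENNReal.ofReal ((1 + ‖p.1‖ ^ 2) ^ (-rA)) *
        (ENNReal.ofReal ((1 + ‖p.1 - p.2‖ ^ 2) ^ (-αB)) *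
          ENNReal.ofReal ((1 + ‖p.2‖ ^ 2) ^ (-αC)))) :=
    ((aux_meas d rA).comp measurable_fst).mul
      (((aux_meas d αB).comp (measurable_fst.sub measurable_snd)).mul
        ((aux_meas d αC).comp measurable_snd))
  have inner_bound : ∀ x : EuclideanSpace ℝ (Fin d),
      (∫⁻ y, ENNReal.ofReal ((1 + ‖x‖ ^ 2) ^ (-rA)) *
        (ENNReal.ofReal ((1 + ‖x - y‖ ^ 2) ^ (-αB)) *
          ENNReal.ofReal ((1 + ‖y‖ ^ 2) ^ (-αC))))
        ≤ ENNReal.ofReal ((1 + ‖x‖ ^ 2) ^ (-rA)) * K := by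
    intro x
    rw [lintegral_const_mul' _ _ ENNReal.ofReal_ne_top]
    apply mul_le_mul_right
    have hf : AEMeasurable (fun y : EuclideanSpace ℝ (Fin d) =>
        ENNReal.ofReal ((1 + ‖x - y‖ ^ 2) ^ (-αB))) volume :=
      ((aux_meas d αB).comp (measurable_const.sub measurable_id)).aemeasurable
    have hg : AEMeasurable (fun y : EuclideanSpace ℝ (Fin d) =>
        ENNReal.ofReal ((1 + ‖y‖ ^ 2) ^ (-αC))) volume := (aux_meas d αC).aemeasurable
    have hHolder := ENNReal.lintegral_mul_le_Lp_mul_Lq volume hpq hf hg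
    simp only [Pi.mul_apply] at hHolder
    refine le_trans hHolder ?_
    rw [hK]
    apply mul_le_mul'
    · apply le_of_eq
      congr 1
      calc (∫⁻ y, ENNReal.ofReal ((1 + ‖x - y‖ ^ 2) ^ (-αB)) ^ pe)
          = ∫⁻ y, (fun z : EuclideanSpace ℝ (Fin d) =>
              ENNReal.ofReal ((1 + ‖z‖ ^ 2) ^ (-αB)) ^ pe) (x - y) := rfl
        _ = ∫⁻ z, ENNReal.ofReal ((1 + ‖z‖ ^ 2) ^ (-αB)) ^ pe :=
            aux_trans d x _ ((aux_meas d αB).pow_const pe)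
        _ = IB := by
            rw [hIB]
            exact lintegral_congr (aux_pow d αB pe hpe0)
    · apply le_of_eq
      congr 1
      rw [hIC]
      exact lintegral_congr (aux_pow d αC qe hqe0)
  have hAfin : (∫⁻ x : EuclideanSpace ℝ (Fin d),
      ENNReal.ofReal ((1 + ‖x‖ ^ 2) ^ (-rA))) < ⊤ := aux_fin d _ hrA
  calc (∫⁻ p : EuclideanSpace ℝ (Fin d) × EuclideanSpace ℝ (Fin d),
        ENNReal.ofReal ((1 + ‖p.1‖ ^ 2) ^ (-rA)) *
          (ENNReal.ofReal ((1 + ‖p.1 - p.2‖ ^ 2) ^ (-αB)) *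
            ENNReal.ofReal ((1 + ‖p.2‖ ^ 2) ^ (-αC))))
      = ∫⁻ x : EuclideanSpace ℝ (Fin d), ∫⁻ y : EuclideanSpace ℝ (Fin d),
          ENNReal.ofReal ((1 + ‖x‖ ^ 2) ^ (-rA)) *
            (ENNReal.ofReal ((1 + ‖x - y‖ ^ 2) ^ (-αB)) *
              ENNReal.ofReal ((1 + ‖y‖ ^ 2) ^ (-αC))) := by
        rw [MeasureTheory.Measure.volume_eq_prod, lintegral_prod _ hmeasF.aemeasurable]
    _ ≤ ∫⁻ x : EuclideanSpace ℝ (Fin d), ENNReal.ofReal ((1 + ‖x‖ ^ 2) ^ (-rA)) * K :=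
        lintegral_mono inner_bound
    _ = (∫⁻ x : EuclideanSpace ℝ (Fin d), ENNReal.ofReal ((1 + ‖x‖ ^ 2) ^ (-rA))) * K :=
        lintegral_mul_const' K _ hKfin
    _ < ⊤ := ENNReal.mul_lt_top hAfin (lt_top_iff_ne_top.mpr hKfin)

/-- The pointwise bound on the region. -/
lemma aux_key (d : ℕ) (α s κ δ : ℝ) (hδ0 : 0 ≤ δ)
    (x y : EuclideanSpace ℝ (Fin d)) (hxy : ‖x - y‖ < ‖y‖) :
    ENNReal.ofReal
        ((1 + ‖x‖ ^ 2) ^ (-(2 * s - κ)) * (1 + ‖x - y‖ ^ 2) ^ (-α) *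
          (1 + ‖y‖ ^ 2) ^ (-α) * (1 + |‖x‖ ^ 2 - ‖x - y‖ ^ 2 + ‖y‖ ^ 2|)⁻¹)
      ≤ ENNReal.ofReal ((4:ℝ) ^ δ) *
        (ENNReal.ofReal ((1 + ‖x‖ ^ 2) ^ (-(2 * s - κ + 1 + δ))) *
          (ENNReal.ofReal ((1 + ‖x - y‖ ^ 2) ^ (-α)) *
            ENNReal.ofReal ((1 + ‖y‖ ^ 2) ^ (-(α - δ))))) := by
  set a : ℝ := 1 + ‖x‖ ^ 2 with ha
  set b : ℝ := 1 + ‖x - y‖ ^ 2 with hb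
  set c : ℝ := 1 + ‖y‖ ^ 2 with hc
  have ha0 : (0:ℝ) < a := by positivity
  have hb0 : (0:ℝ) < b := by positivity
  have hc0 : (0:ℝ) < c := by positivity
  have hsq : ‖x - y‖ ^ 2 ≤ ‖y‖ ^ 2 := by
    have := norm_nonneg (x - y)
    nlinarith
  have habs : a ≤ 1 + |‖x‖ ^ 2 - ‖x - y‖ ^ 2 + ‖y‖ ^ 2| := by
    rw [abs_of_nonneg (by nlinarith [norm_nonneg x])]
    rw [ha]
    nlinarith
  have hinv : (1 + |‖x‖ ^ 2 - ‖x - y‖ ^ 2 + ‖y‖ ^ 2|)⁻¹ ≤ a⁻¹ := inv_anti₀ ha0 habs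
  have hnx : ‖x‖ < 2 * ‖y‖ := by
    have h3 : ‖x‖ ≤ ‖x - y‖ + ‖y‖ := by
      calc ‖x‖ = ‖(x - y) + y‖ := by rw [sub_add_cancel]
        _ ≤ ‖x - y‖ + ‖y‖ := norm_add_le _ _
    linarith
  have hac : a ≤ 4 * c := by
    have h4 : ‖x‖ ^ 2 ≤ 4 * ‖y‖ ^ 2 := by nlinarith [norm_nonneg x, norm_nonneg y]
    rw [ha, hc]
    nlinarith
  have hcδ : c ^ (-δ) ≤ (4:ℝ) ^ δ * a ^ (-δ) := by
    have h4 : a / 4 ≤ c := by linarith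
    have h5 : c ^ (-δ) ≤ (a / 4) ^ (-δ) :=
      Real.rpow_le_rpow_of_nonpos (by positivity) h4 (by linarith)
    have h6 : (a / 4 : ℝ) ^ (-δ) = (4:ℝ) ^ δ * a ^ (-δ) := by
      rw [Real.div_rpow ha0.le (by norm_num), Real.rpow_neg (by norm_num : (0:ℝ) ≤ 4),
        div_eq_mul_inv, inv_inv]
      ring
    linarith
  have hsplit : c ^ (-α) = c ^ (-δ) * c ^ (-(α - δ)) := by
    rw [← Real.rpow_add hc0]
    congr 1
    ring
  have hA3 : a ^ (-(2 * s - κ + 1 + δ)) = a ^ (-(2 * s - κ)) * a ^ (-δ) * a⁻¹ := by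
    rw [← Real.rpow_neg_one a, ← Real.rpow_add ha0, ← Real.rpow_add ha0]
    congr 1
    ring
  have hreal : a ^ (-(2 * s - κ)) * b ^ (-α) * c ^ (-α) *
      (1 + |‖x‖ ^ 2 - ‖x - y‖ ^ 2 + ‖y‖ ^ 2|)⁻¹
      ≤ (4:ℝ) ^ δ * (a ^ (-(2 * s - κ + 1 + δ)) * (b ^ (-α) * c ^ (-(α - δ)))) := by
    calc a ^ (-(2 * s - κ)) * b ^ (-α) * c ^ (-α) *
          (1 + |‖x‖ ^ 2 - ‖x - y‖ ^ 2 + ‖y‖ ^ 2|)⁻¹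
        ≤ a ^ (-(2 * s - κ)) * b ^ (-α) * c ^ (-α) * a⁻¹ := by
          apply mul_le_mul_of_nonneg_left hinv (by positivity)
      _ = a ^ (-(2 * s - κ)) * b ^ (-α) * (c ^ (-δ) * c ^ (-(α - δ))) * a⁻¹ := by
          rw [← hsplit]
      _ ≤ a ^ (-(2 * s - κ)) * b ^ (-α) * (((4:ℝ) ^ δ * a ^ (-δ)) * c ^ (-(α - δ))) * a⁻¹ := by
          gcongr
      _ = (4:ℝ) ^ δ * (a ^ (-(2 * s - κ + 1 + δ)) * (b ^ (-α) * c ^ (-(α - δ)))) := by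
          rw [hA3]
          ring
  calc ENNReal.ofReal (a ^ (-(2 * s - κ)) * b ^ (-α) * c ^ (-α) *
        (1 + |‖x‖ ^ 2 - ‖x - y‖ ^ 2 + ‖y‖ ^ 2|)⁻¹)
      ≤ ENNReal.ofReal ((4:ℝ) ^ δ * (a ^ (-(2 * s - κ + 1 + δ)) * (b ^ (-α) * c ^ (-(α - δ))))) :=
        ENNReal.ofReal_le_ofReal hreal
    _ = ENNReal.ofReal ((4:ℝ) ^ δ) *
        (ENNReal.ofReal (a ^ (-(2 * s - κ + 1 + δ))) *
          (ENNReal.ofReal (b ^ (-α)) * ENNReal.ofReal (c ^ (-(α - δ))))) := by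
        rw [ENNReal.ofReal_mul (by positivity), ENNReal.ofReal_mul (by positivity),
          ENNReal.ofReal_mul (by positivity)]

theorem stmt_9 (d : ℕ) (hd : 1 ≤ d) (α s κ : ℝ)
    (hα1 : (d : ℝ) / 4 < α) (hα2 : α < (d : ℝ) / 2)
    (hs : (d : ℝ) / 2 - α < s) (hκ : 0 ≤ κ)
    (hcond : 0 < 4 * s - 2 * κ + 4 * α - 2 * d) :
    (∫⁻ p in {p : EuclideanSpace ℝ (Fin d) × EuclideanSpace ℝ (Fin d) |
        1 < ‖p.1‖ ∧ ‖p.1 - p.2‖ < ‖p.2‖},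
        ENNReal.ofReal
          ((1 + ‖p.1‖ ^ 2) ^ (-(2 * s - κ)) * (1 + ‖p.1 - p.2‖ ^ 2) ^ (-α) *
            (1 + ‖p.2‖ ^ 2) ^ (-α) *
            (1 + |‖p.1‖ ^ 2 - ‖p.1 - p.2‖ ^ 2 + ‖p.2‖ ^ 2|)⁻¹)) < ⊤ := by
  have hd1 : (1:ℝ) ≤ (d:ℝ) := by exact_mod_cast hd
  -- choose δ
  obtain ⟨δ, hδ0, hδL, hδG⟩ : ∃ δ : ℝ, 0 < δ ∧ (d:ℝ)/2 - 1 - (2*s - κ) < δ ∧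
      δ < 2*α - (d:ℝ)/2 := by
    rcases le_total ((d:ℝ)/2 - 1 - (2*s - κ)) 0 with h | h
    · exact ⟨(2*α - (d:ℝ)/2)/2, by linarith, by linarith, by linarith⟩
    · exact ⟨((d:ℝ)/2 - 1 - (2*s - κ) + (2*α - (d:ℝ)/2))/2, by linarith, by linarith, by linarith⟩
  have hδα : δ < α := by linarith
  have hδd : 2*δ < (d:ℝ) := by linarith
  -- choose conjugate exponents
  obtain ⟨pe, qe, hpq, hB2, hC2⟩ : ∃ pe qe : ℝ, Real.HolderConjugate pe qe ∧
      (d:ℝ) < 2*(α*pe) ∧ (d:ℝ) < 2*((α-δ)*qe) := by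
    have hden1 : (0:ℝ) < (d:ℝ) + 2*δ := by linarith
    have hden2 : (0:ℝ) < (d:ℝ) - 2*δ := by linarith
    refine ⟨2*(d:ℝ)/((d:ℝ)+2*δ), 2*(d:ℝ)/((d:ℝ)-2*δ), Real.holderConjugate_iff.mpr ⟨?_, ?_⟩, ?_, ?_⟩
    · rw [lt_div_iff₀ hden1]
      linarith
    · field_simp
      ring
    · have h1 : 2*(α*(2*(d:ℝ)/((d:ℝ)+2*δ))) = 4*α*(d:ℝ)/((d:ℝ)+2*δ) := by ring
      rw [h1, lt_div_iff₀ hden1]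
      nlinarith
    · have h1 : 2*((α-δ)*(2*(d:ℝ)/((d:ℝ)-2*δ))) = 4*(α-δ)*(d:ℝ)/((d:ℝ)-2*δ) := by ring
      rw [h1, lt_div_iff₀ hden2]
      nlinarith
  have hrA : (d:ℝ) < 2*(2*s - κ + 1 + δ) := by linarith
  -- measurability of the set
  have hS : MeasurableSet {p : EuclideanSpace ℝ (Fin d) × EuclideanSpace ℝ (Fin d) |
      1 < ‖p.1‖ ∧ ‖p.1 - p.2‖ < ‖p.2‖} := by
    have h1 : IsOpen {p : EuclideanSpace ℝ (Fin d) × EuclideanSpace ℝ (Fin d) | 1 < ‖p.1‖} :=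
      isOpen_lt continuous_const continuous_fst.norm
    have h2 : IsOpen {p : EuclideanSpace ℝ (Fin d) × EuclideanSpace ℝ (Fin d) |
        ‖p.1 - p.2‖ < ‖p.2‖} :=
      isOpen_lt (continuous_fst.sub continuous_snd).norm continuous_snd.norm
    exact (h1.inter h2).measurableSet
  have hstep1 : (∫⁻ p in {p : EuclideanSpace ℝ (Fin d) × EuclideanSpace ℝ (Fin d) |
        1 < ‖p.1‖ ∧ ‖p.1 - p.2‖ < ‖p.2‖},
        ENNReal.ofReal
          ((1 + ‖p.1‖ ^ 2) ^ (-(2 * s - κ)) * (1 + ‖p.1 - p.2‖ ^ 2) ^ (-α) *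
            (1 + ‖p.2‖ ^ 2) ^ (-α) *
            (1 + |‖p.1‖ ^ 2 - ‖p.1 - p.2‖ ^ 2 + ‖p.2‖ ^ 2|)⁻¹))
      ≤ ∫⁻ p in {p : EuclideanSpace ℝ (Fin d) × EuclideanSpace ℝ (Fin d) |
        1 < ‖p.1‖ ∧ ‖p.1 - p.2‖ < ‖p.2‖},
        ENNReal.ofReal ((4:ℝ) ^ δ) *
          (ENNReal.ofReal ((1 + ‖p.1‖ ^ 2) ^ (-(2 * s - κ + 1 + δ))) *
            (ENNReal.ofReal ((1 + ‖p.1 - p.2‖ ^ 2) ^ (-α)) *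
              ENNReal.ofReal ((1 + ‖p.2‖ ^ 2) ^ (-(α - δ))))) := by
    apply setLIntegral_mono' hS
    rintro ⟨x, y⟩ ⟨_, hxy⟩
    exact aux_key d α s κ δ hδ0.le x y hxy
  refine lt_of_le_of_lt (hstep1.trans (setLIntegral_le_lintegral _ _)) ?_
  rw [lintegral_const_mul' _ _ ENNReal.ofReal_ne_top]
  exact ENNReal.mul_lt_top ENNReal.ofReal_lt_top
    (aux_assemble d (2*s - κ + 1 + δ) α (α - δ) pe qe hpq hrA hB2 hC2)
end
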